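/- The gradient identity for log J: ∇ log J(ψ) = ((1−ν)/ω²)(ψ − f_λ), where λ_j ∝ π_j exp(−‖f_j − Y‖²/(2ω²) + (1−ν)‖ψ − f_j‖²/(2ω²)) and f_λ = ∑_j λ_j f_j. In particular, ψ is a critical point of log J if and only if ψ = f_λ, i.e., the BMAX estimator is a fixed point of the exponential reweighting map. -/

import Mathlib

set_option maxHeartbeats 1000000


open Real Finset RealInnerProductSpace

theorem logJ_gradient_identity (n M : ℕ) (Y : EuclideanSpace ℝ (Fin n))
    (f : Fin M → EuclideanSpace ℝ (Fin n)) (pi : Fin M → ℝ)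
    (hpi : ∀ j, 0 < pi j) (hpi1 : ∑ j, pi j = 1)
    (ν ω : ℝ) (hν : ν ∈ Set.Ioo (0:ℝ) 1) (hω : 0 < ω)
    (J : EuclideanSpace ℝ (Fin n) → ℝ)
    (hJ : ∀ ψ, J ψ = ∑ j, pi j *
      Real.exp (-‖f j - Y‖^2 / (2*ω^2) + (1-ν) * ‖ψ - f j‖^2 / (2*ω^2)))
    (lam : EuclideanSpace ℝ (Fin n) → Fin M → ℝ)
    (hlam : ∀ ψ j, lam ψ j =
      pi j * Real.exp (-‖f j - Y‖^2 / (2*ω^2) + (1-ν) * ‖ψ - f j‖^2 / (2*ω^2)) / J ψ)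
    (flam : EuclideanSpace ℝ (Fin n) → EuclideanSpace ℝ (Fin n))
    (hflam : ∀ ψ, flam ψ = ∑ j, lam ψ j • f j) :
    (∀ ψ v, fderiv ℝ (fun ψ => Real.log (J ψ)) ψ v
        = ((1-ν)/ω^2) * ⟪ψ - flam ψ, v⟫)
    ∧ (∀ ψ, fderiv ℝ (fun ψ => Real.log (J ψ)) ψ = 0 ↔ ψ = flam ψ) := by
  -- abbreviations
  set c : ℝ := (1-ν)/ω^2 with hc
  have hc0 : 0 < c := by
    apply div_pos (by linarith [hν.2]) (by positivity)
  set g : Fin M → EuclideanSpace ℝ (Fin n) → ℝ := fun j ψ =>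
    pi j * Real.exp (-‖f j - Y‖^2 / (2*ω^2) + (1-ν) * ‖ψ - f j‖^2 / (2*ω^2)) with hg
  have hM : Nonempty (Fin M) := by
    by_contra h
    rw [Finset.sum_eq_zero (fun j _ => absurd ⟨j⟩ h)] at hpi1
    norm_num at hpi1
  have hJpos : ∀ ψ, 0 < J ψ := by
    intro ψ
    rw [hJ ψ]
    exact Finset.sum_pos (fun j _ => mul_pos (hpi j) (Real.exp_pos _)) Finset.univ_nonempty
  -- derivative of each summand
  have hgderiv : ∀ (j : Fin M) (ψ : EuclideanSpace ℝ (Fin n)),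
      HasFDerivAt (g j) ((g j ψ * c) • innerSL ℝ (ψ - f j)) ψ := by
    intro j ψ
    have h1 : HasFDerivAt (fun ψ : EuclideanSpace ℝ (Fin n) => ‖ψ - f j‖^2) (2 • (innerSL ℝ (ψ - f j))) ψ := by
      have := ((hasFDerivAt_id ψ).sub_const (f j)).norm_sq
      simpa using this
    have h2 : HasFDerivAt
        (fun ψ : EuclideanSpace ℝ (Fin n) => -‖f j - Y‖^2 / (2*ω^2) + (1-ν) * ‖ψ - f j‖^2 / (2*ω^2))
        (((1-ν)/(2*ω^2)) • (2 • innerSL ℝ (ψ - f j))) ψ := by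
      have h3 := (h1.const_mul ((1-ν)/(2*ω^2))).const_add (-‖f j - Y‖^2 / (2*ω^2))
      refine h3.congr_of_eventuallyEq (Filter.Eventually.of_forall fun ψ' => ?_)
      ring
    have h4 := (h2.exp).const_mul (pi j)
    refine h4.congr_fderiv ?_
    ext v
    simp only [ContinuousLinearMap.smul_apply, smul_eq_mul, hg,
      ContinuousLinearMap.coe_smul', Pi.smul_apply]
    ring
  have hJderiv : ∀ ψ : EuclideanSpace ℝ (Fin n),
      HasFDerivAt J (∑ j, (g j ψ * c) • innerSL ℝ (ψ - f j)) ψ := by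
    intro ψ
    have : HasFDerivAt (fun ψ => ∑ j, g j ψ)
        (∑ j, (g j ψ * c) • innerSL ℝ (ψ - f j)) ψ :=
      HasFDerivAt.fun_sum (fun j _ => hgderiv j ψ)
    have hfun : J = fun ψ => ∑ j, g j ψ := funext hJ
    rw [hfun]
    exact this
  -- key algebraic identity
  have key : ∀ (ψ v : EuclideanSpace ℝ (Fin n)),
      (J ψ)⁻¹ * ∑ j, (g j ψ * c) * ⟪ψ - f j, v⟫ = c * ⟪ψ - flam ψ, v⟫ := by
    intro ψ v
    have hS : J ψ ≠ 0 := (hJpos ψ).ne'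
    have hSsum : J ψ = ∑ j, g j ψ := hJ ψ
    have hlam' : ∀ j, lam ψ j = g j ψ / J ψ := fun j => hlam ψ j
    have expand : ∑ j, (g j ψ * c) * ⟪ψ - f j, v⟫
        = c * ⟪ψ, v⟫ * (∑ j, g j ψ) - c * ∑ j, g j ψ * ⟪f j, v⟫ := by
      rw [Finset.sum_congr rfl (fun j _ => by
        rw [inner_sub_left]; ring :
        ∀ j ∈ Finset.univ, (g j ψ * c) * ⟪ψ - f j, v⟫
          = c * ⟪ψ, v⟫ * g j ψ - c * (g j ψ * ⟪f j, v⟫))]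
      rw [Finset.sum_sub_distrib, ← Finset.mul_sum, ← Finset.mul_sum]
    have hrhs : ⟪ψ - flam ψ, v⟫ = ⟪ψ, v⟫ - (J ψ)⁻¹ * ∑ j, g j ψ * ⟪f j, v⟫ := by
      rw [hflam ψ, inner_sub_left, sum_inner]
      congr 1
      rw [Finset.mul_sum]
      exact Finset.sum_congr rfl fun j _ => by
        rw [real_inner_smul_left, hlam' j]; ring
    rw [expand, ← hSsum, hrhs]
    field_simp
  -- the derivative of log J
  have hlog : ∀ ψ : EuclideanSpace ℝ (Fin n),
      HasFDerivAt (fun ψ => Real.log (J ψ)) (c • innerSL ℝ (ψ - flam ψ)) ψ := by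
    intro ψ
    have h := (hJderiv ψ).log (hJpos ψ).ne'
    refine h.congr_fderiv ?_
    ext v
    simp only [ContinuousLinearMap.coe_smul', Pi.smul_apply, smul_eq_mul,
      ContinuousLinearMap.coe_sum', Finset.sum_apply, ContinuousLinearMap.smul_apply,
      innerSL_apply_apply]
    rw [← key ψ v]
  have part1 : ∀ ψ v, fderiv ℝ (fun ψ => Real.log (J ψ)) ψ v = c * ⟪ψ - flam ψ, v⟫ := by
    intro ψ v
    rw [(hlog ψ).fderiv]
    simp only [ContinuousLinearMap.coe_smul', Pi.smul_apply, innerSL_apply_apply, smul_eq_mul]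
  refine ⟨part1, fun ψ => ⟨fun h => ?_, fun h => ?_⟩⟩
  · have h0 := part1 ψ (ψ - flam ψ)
    rw [h, real_inner_self_eq_norm_sq] at h0
    simp only [ContinuousLinearMap.zero_apply] at h0
    have : ‖ψ - flam ψ‖^2 = 0 := by
      rcases mul_eq_zero.mp h0.symm with h' | h'
      · exact absurd h' hc0.ne'
      · exact h'
    have : ψ - flam ψ = 0 := by
      rwa [pow_eq_zero_iff (by norm_num), norm_eq_zero] at this
    exact sub_eq_zero.mp this
  · ext v
    rw [part1, ← h]
    simp
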